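/- Define θ_3(v|τ) := ∑_{k=-∞}^∞ q^{k²} e^{2kπiv} with q = e^{πiτ}, Im τ > 0. Then for q ∈ (0,1) real (i.e., τ = it with t > 0) and v real, θ_3 satisfies the Jacobi triple product identity θ_3(v|τ) = (q²;q²)_∞ · (-q e^{2πiv}; q²)_∞ · (-q e^{-2πiv}; q²)_∞. -/

import Mathlib

open Real Complex

/-- The infinite q-Pochhammer symbol `(z; p)_∞`. -/
noncomputable def qPochInf (z p : ℂ) : ℂ := ∏' k : ℕ, (1 - z * p ^ k)

set_option maxHeartbeats 1000000

open Finset Filter Topology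

noncomputable def qfac (Q : ℝ) (n : ℕ) : ℝ := ∏ k ∈ Finset.range n, (1 - Q ^ (k + 1))

noncomputable def qbinom (Q : ℝ) (n j : ℕ) : ℝ :=
  if j ≤ n then qfac Q n / (qfac Q j * qfac Q (n - j)) else 0

noncomputable def qfacLim (Q : ℝ) : ℝ := ∏' k : ℕ, (1 - Q ^ (k + 1))

lemma qfac_pos {Q : ℝ} (hQ0 : 0 < Q) (hQ1 : Q < 1) (n : ℕ) : 0 < qfac Q n := by
  apply Finset.prod_pos
  intro k _
  have : Q ^ (k + 1) < 1 := pow_lt_one₀ hQ0.le hQ1 (Nat.succ_ne_zero k)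
  linarith

lemma qfac_le_one {Q : ℝ} (hQ0 : 0 < Q) (hQ1 : Q < 1) (n : ℕ) : qfac Q n ≤ 1 := by
  apply Finset.prod_le_one
  · intro k _
    have : Q ^ (k + 1) < 1 := pow_lt_one₀ hQ0.le hQ1 (Nat.succ_ne_zero k)
    linarith
  · intro k _
    have : 0 < Q ^ (k + 1) := pow_pos hQ0 _
    linarith

lemma qfac_succ (Q : ℝ) (n : ℕ) : qfac Q (n + 1) = qfac Q n * (1 - Q ^ (n + 1)) :=
  Finset.prod_range_succ _ _

lemma qfac_zero (Q : ℝ) : qfac Q 0 = 1 := rfl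

lemma qbinom_zero {Q : ℝ} (hQ0 : 0 < Q) (hQ1 : Q < 1) (n : ℕ) : qbinom Q n 0 = 1 := by
  rw [qbinom, if_pos (Nat.zero_le n), qfac_zero, one_mul, Nat.sub_zero,
    div_self (qfac_pos hQ0 hQ1 n).ne']

lemma qbinom_self {Q : ℝ} (hQ0 : 0 < Q) (hQ1 : Q < 1) (n : ℕ) : qbinom Q n n = 1 := by
  rw [qbinom, if_pos le_rfl, Nat.sub_self, qfac_zero, mul_one,
    div_self (qfac_pos hQ0 hQ1 n).ne']

lemma qbinom_of_gt {Q : ℝ} {n j : ℕ} (h : n < j) : qbinom Q n j = 0 := by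
  simp [qbinom, not_le.2 h]

lemma qbinom_nonneg {Q : ℝ} (hQ0 : 0 < Q) (hQ1 : Q < 1) (n j : ℕ) : 0 ≤ qbinom Q n j := by
  unfold qbinom
  split
  · have := qfac_pos hQ0 hQ1 n
    have := qfac_pos hQ0 hQ1 j
    have := qfac_pos hQ0 hQ1 (n - j)
    positivity
  · exact le_refl _

lemma qbinom_pascal {Q : ℝ} (hQ0 : 0 < Q) (hQ1 : Q < 1) {n j : ℕ} (hj1 : 1 ≤ j)
    (hj : j ≤ n + 1) :
    qbinom Q (n + 1) j = qbinom Q n j + Q ^ (n + 1 - j) * qbinom Q n (j - 1) := by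
  have hfp : ∀ m, (0:ℝ) < qfac Q m := qfac_pos hQ0 hQ1
  obtain ⟨a, rfl⟩ : ∃ a, j = a + 1 := ⟨j - 1, by omega⟩
  rcases eq_or_lt_of_le hj with h | h
  · -- j = n + 1
    have hn : n = a := by omega
    subst hn
    rw [qbinom_self hQ0 hQ1, qbinom_of_gt (by omega)]
    simp only [Nat.add_sub_cancel, Nat.sub_self, pow_zero]
    rw [qbinom_self hQ0 hQ1]
    ring
  · obtain ⟨b, rfl⟩ : ∃ b, n = a + 1 + b := ⟨n - a - 1, by omega⟩
    have s1 : a + 1 + b + 1 - (a + 1) = b + 1 := by omega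
    have s2 : a + 1 + b - (a + 1) = b := by omega
    have s3 : a + 1 - 1 = a := by omega
    have s4 : a + 1 + b - a = b + 1 := by omega
    rw [qbinom, if_pos (by omega), qbinom, if_pos (by omega), qbinom, if_pos (by omega),
      s1, s2, s3, s4]
    have e1 : qfac Q (a + 1 + b + 1) = qfac Q (a + 1 + b) * (1 - Q ^ (a + 1 + b + 1)) :=
      qfac_succ Q _
    have e3 : qfac Q (b + 1) = qfac Q b * (1 - Q ^ (b + 1)) := qfac_succ Q _
    have e4 : qfac Q (a + 1) = qfac Q a * (1 - Q ^ (a + 1)) := qfac_succ Q _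
    have key : (1 : ℝ) - Q ^ (a + 1 + b + 1)
        = (1 - Q ^ (b + 1)) + Q ^ (b + 1) * (1 - Q ^ (a + 1)) := by
      have : Q ^ (b + 1) * Q ^ (a + 1) = Q ^ (a + 1 + b + 1) := by
        rw [← pow_add]; ring_nf
      nlinarith [this]
    rw [e1, e3, e4, key]
    have h1 : qfac Q a ≠ 0 := (hfp _).ne'
    have h2 : qfac Q b ≠ 0 := (hfp _).ne'
    have h3 : (1:ℝ) - Q ^ (a + 1) ≠ 0 := by
      have : Q ^ (a + 1) < 1 := pow_lt_one₀ hQ0.le hQ1 (by omega)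
      linarith
    have h4 : (1:ℝ) - Q ^ (b + 1) ≠ 0 := by
      have : Q ^ (b + 1) < 1 := pow_lt_one₀ hQ0.le hQ1 (by omega)
      linarith
    field_simp

lemma gauss_qbinom {q : ℝ} (hq0 : 0 < q) (hq1 : q < 1) (z : ℂ) (n : ℕ) :
    ∏ k ∈ Finset.range n, (1 + z * (q:ℂ) ^ (2 * k)) =
      ∑ j ∈ Finset.range (n + 1), (qbinom (q ^ 2) n j : ℂ) * (q:ℂ) ^ (j * (j - 1)) * z ^ j := by
  have hQ0 : 0 < q ^ 2 := by positivity
  have hQ1 : q ^ 2 < 1 := by nlinarith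
  induction n with
  | zero => simp [qbinom_zero hQ0 hQ1]
  | succ n ih =>
    rw [Finset.prod_range_succ, ih, Finset.sum_range_succ' _ (n + 1)]
    have h0 : (qbinom (q ^ 2) (n + 1) 0 : ℂ) * (q:ℂ) ^ (0 * (0 - 1)) * z ^ 0 = 1 := by
      rw [qbinom_zero hQ0 hQ1]; simp
    rw [h0]
    have hsplit : ∀ i ∈ Finset.range (n + 1),
        (qbinom (q ^ 2) (n + 1) (i + 1) : ℂ) * (q:ℂ) ^ ((i + 1) * (i + 1 - 1)) * z ^ (i + 1)
        = (qbinom (q ^ 2) n (i + 1) : ℂ) * (q:ℂ) ^ ((i + 1) * (i + 1 - 1)) * z ^ (i + 1)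
          + ((qbinom (q ^ 2) n i : ℂ) * (q:ℂ) ^ (i * (i - 1)) * z ^ i) * (z * (q:ℂ) ^ (2 * n)) := by
      intro i hi
      simp only [Finset.mem_range] at hi
      rw [qbinom_pascal hQ0 hQ1 (by omega) (by omega)]
      push_cast
      have hexp : ((q:ℂ) ^ 2) ^ (n - i) * (q:ℂ) ^ ((i + 1) * i)
          = (q:ℂ) ^ (i * (i - 1)) * (q:ℂ) ^ (2 * n) := by
        rw [← pow_mul, ← pow_add, ← pow_add]
        congr 1
        cases i with
        | zero => omega
        | succ i0 =>
          zify [show i0 + 1 ≤ n by omega, show 1 ≤ i0 + 1 by omega]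
          push_cast
          ring
      try simp only [Nat.add_sub_cancel, Nat.succ_sub_succ]
      linear_combination ((qbinom (q ^ 2) n i : ℂ) * z ^ (i + 1)) * hexp
    rw [Finset.sum_congr rfl hsplit, Finset.sum_add_distrib]
    have hA : ∑ i ∈ Finset.range (n + 1),
        (qbinom (q ^ 2) n (i + 1) : ℂ) * (q:ℂ) ^ ((i + 1) * (i + 1 - 1)) * z ^ (i + 1)
        = ∑ i ∈ Finset.range n,
          (qbinom (q ^ 2) n (i + 1) : ℂ) * (q:ℂ) ^ ((i + 1) * (i + 1 - 1)) * z ^ (i + 1) := by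
      rw [Finset.sum_range_succ, qbinom_of_gt (by omega)]
      simp
    have hT : ∑ j ∈ Finset.range (n + 1), (qbinom (q ^ 2) n j : ℂ) * (q:ℂ) ^ (j * (j - 1)) * z ^ j
        = ∑ i ∈ Finset.range n,
          (qbinom (q ^ 2) n (i + 1) : ℂ) * (q:ℂ) ^ ((i + 1) * (i + 1 - 1)) * z ^ (i + 1) + 1 := by
      rw [Finset.sum_range_succ' _ n, qbinom_zero hQ0 hQ1]
      simp
    have hB : ∑ i ∈ Finset.range (n + 1),
        ((qbinom (q ^ 2) n i : ℂ) * (q:ℂ) ^ (i * (i - 1)) * z ^ i) * (z * (q:ℂ) ^ (2 * n))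
        = (∑ j ∈ Finset.range (n + 1), (qbinom (q ^ 2) n j : ℂ) * (q:ℂ) ^ (j * (j - 1)) * z ^ j)
          * (z * (q:ℂ) ^ (2 * n)) := by
      rw [Finset.sum_mul]
    rw [hA, hB, hT]
    ring

lemma prod_zpow_sum {a : ℂ} (ha : a ≠ 0) (N : ℕ) (f : ℕ → ℤ) :
    ∏ k ∈ Finset.range N, a ^ (f k) = a ^ (∑ k ∈ Finset.range N, f k) := by
  induction N with
  | zero => simp
  | succ n ih => rw [Finset.prod_range_succ, Finset.sum_range_succ, ih, zpow_add₀ ha]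

lemma sum_odd_eq_sq (N : ℕ) : ∑ k ∈ Finset.range N, (2 * k + 1) = N ^ 2 := by
  induction N with
  | zero => simp
  | succ n ih =>
    rw [Finset.sum_range_succ, ih]
    ring

lemma key_identity {q : ℝ} (hq0 : 0 < q) (hq1 : q < 1) (x : ℂ) (hx : x ≠ 0) (N : ℕ) :
    ∏ j ∈ Finset.range N, ((1 + x * (q:ℂ) ^ (2 * j + 1)) * (1 + x⁻¹ * (q:ℂ) ^ (2 * j + 1)))
      = ∑ m ∈ Finset.Icc (-(N:ℤ)) (N:ℤ),
          (qbinom (q ^ 2) (2 * N) (m + N).toNat : ℂ) * (q:ℂ) ^ (m ^ 2) * x ^ m := by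
  have hqc : (q:ℂ) ≠ 0 := by exact_mod_cast hq0.ne'
  set w : ℂ := x * (q:ℂ) ^ ((1:ℤ) - 2 * N) with hw
  -- Step 1: split the Gauss product ∏_{k<2N} (1 + w q^{2k}) into two halves
  have hsplit : ∏ k ∈ Finset.range (2 * N), (1 + w * (q:ℂ) ^ (2 * k))
      = (x ^ N * (q:ℂ) ^ (-(N:ℤ) ^ 2)) *
        ∏ j ∈ Finset.range N,
          ((1 + x * (q:ℂ) ^ (2 * j + 1)) * (1 + x⁻¹ * (q:ℂ) ^ (2 * j + 1))) := by
    have h2N : 2 * N = N + N := by ring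
    rw [h2N, Finset.prod_range_add]
    have hsecond : ∀ k ∈ Finset.range N,
        (1 + w * (q:ℂ) ^ (2 * (N + k))) = 1 + x * (q:ℂ) ^ (2 * k + 1) := by
      intro k _
      rw [hw]
      have : x * (q:ℂ) ^ ((1:ℤ) - 2 * N) * (q:ℂ) ^ (2 * (N + k))
          = x * (q:ℂ) ^ (2 * k + 1) := by
        rw [mul_assoc, ← zpow_natCast (q:ℂ) (2 * (N + k)), ← zpow_add₀ hqc,
          ← zpow_natCast (q:ℂ) (2 * k + 1)]
        congr 1
        push_cast
        ring
      rw [this]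
    have hfirst : ∏ k ∈ Finset.range N, (1 + w * (q:ℂ) ^ (2 * k))
        = x ^ N * (q:ℂ) ^ (-(N:ℤ) ^ 2) * ∏ j ∈ Finset.range N, (1 + x⁻¹ * (q:ℂ) ^ (2 * j + 1)) := by
      rw [← Finset.prod_range_reflect]
      have hterm : ∀ j ∈ Finset.range N,
          (1 + w * (q:ℂ) ^ (2 * (N - 1 - j)))
          = (x * (q:ℂ) ^ (-(2 * (j:ℤ) + 1))) * (1 + x⁻¹ * (q:ℂ) ^ (2 * j + 1)) := by
        intro j hj
        simp only [Finset.mem_range] at hj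
        have hww : w * (q:ℂ) ^ (2 * (N - 1 - j)) = x * (q:ℂ) ^ (-(2 * (j:ℤ) + 1)) := by
          rw [hw, mul_assoc, ← zpow_natCast (q:ℂ) (2 * (N - 1 - j)), ← zpow_add₀ hqc]
          congr 1
          have : (((2 * (N - 1 - j) : ℕ)) : ℤ) = 2 * (N:ℤ) - 2 - 2 * j := by
            omega
          rw [this]
          ring
        have hone : (x * (q:ℂ) ^ (-(2 * (j:ℤ) + 1))) * (x⁻¹ * (q:ℂ) ^ (2 * j + 1)) = 1 := by
          rw [← zpow_natCast (q:ℂ) (2 * j + 1),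
            show ((2 * j + 1 : ℕ) : ℤ) = 2 * (j:ℤ) + 1 by push_cast; ring,
            mul_mul_mul_comm, mul_inv_cancel₀ hx, ← zpow_add₀ hqc,
            show -(2 * (j:ℤ) + 1) + (2 * (j:ℤ) + 1) = 0 by ring, zpow_zero, one_mul]
        rw [hww, mul_add, mul_one, hone, add_comm]
      rw [Finset.prod_congr rfl hterm, Finset.prod_mul_distrib, Finset.prod_mul_distrib]
      have : ∏ j ∈ Finset.range N, (q:ℂ) ^ (-(2 * (j:ℤ) + 1)) = (q:ℂ) ^ (-(N:ℤ) ^ 2) := by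
        rw [prod_zpow_sum hqc]
        congr 1
        have : ∑ k ∈ Finset.range N, (-(2 * (k:ℤ) + 1)) = -((∑ k ∈ Finset.range N, (2 * k + 1) : ℕ) : ℤ) := by
          push_cast
          simp [Finset.sum_add_distrib, Finset.mul_sum]
        rw [this, sum_odd_eq_sq]
        push_cast
        ring
      rw [Finset.prod_const, this, Finset.card_range]
    rw [Finset.prod_congr rfl hsecond, hfirst, Finset.prod_mul_distrib]
    ring
  have hgauss := gauss_qbinom hq0 hq1 w (2 * N)
  have hpre : (x ^ N * (q:ℂ) ^ (-(N:ℤ) ^ 2)) ≠ 0 := by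
    apply mul_ne_zero (pow_ne_zero _ hx) (zpow_ne_zero _ hqc)
  apply mul_left_cancel₀ hpre
  rw [← hsplit, hgauss]
  have hterm : ∀ j ∈ Finset.range (2 * N + 1),
      (qbinom (q ^ 2) (2 * N) j : ℂ) * (q:ℂ) ^ (j * (j - 1)) * w ^ j
      = (x ^ N * (q:ℂ) ^ (-(N:ℤ) ^ 2)) *
        ((qbinom (q ^ 2) (2 * N) j : ℂ) * (q:ℂ) ^ (((j:ℤ) - N) ^ 2) * x ^ ((j:ℤ) - N)) := by
    intro j hj
    simp only [Finset.mem_range] at hj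
    have hj' : ((j * (j - 1) : ℕ) : ℤ) = (j:ℤ) * ((j:ℤ) - 1) := by
      rcases Nat.eq_zero_or_pos j with h | h
      · subst h; simp
      · push_cast [Nat.cast_sub h]; ring
    have e1 : (q:ℂ) ^ ((j * (j - 1) : ℕ)) * (q:ℂ) ^ (((1:ℤ) - 2 * N) * j)
        = (q:ℂ) ^ (-(N:ℤ) ^ 2) * (q:ℂ) ^ (((j:ℤ) - N) ^ 2) := by
      rw [← zpow_natCast (q:ℂ) (j * (j - 1)), ← zpow_add₀ hqc, ← zpow_add₀ hqc, hj']
      congr 1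
      ring
    have e2 : x ^ j = x ^ N * x ^ ((j:ℤ) - N) := by
      rw [← zpow_natCast x j, ← zpow_natCast x N, ← zpow_add₀ hx]
      congr 1
      ring
    calc (qbinom (q ^ 2) (2 * N) j : ℂ) * (q:ℂ) ^ (j * (j - 1)) * w ^ j
        = (qbinom (q ^ 2) (2 * N) j : ℂ) *
            ((q:ℂ) ^ ((j * (j - 1) : ℕ)) * (q:ℂ) ^ (((1:ℤ) - 2 * N) * j)) * x ^ j := by
          rw [hw, mul_pow, ← zpow_natCast ((q:ℂ) ^ ((1:ℤ) - 2 * N)) j, ← zpow_mul]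
          ring
      _ = _ := by rw [e1, e2]; ring
  rw [Finset.sum_congr rfl hterm, ← Finset.mul_sum]
  congr 1
  -- reindex from range (2N+1) to Icc (-N) N
  refine Finset.sum_nbij' (fun j => (j:ℤ) - N) (fun m => (m + N).toNat) ?_ ?_ ?_ ?_ ?_ <;>
      simp only [Finset.mem_range, Finset.mem_Icc] <;> intro a ha
  · omega
  · omega
  · omega
  · omega
  · rw [show (((a:ℤ) - N) + N).toNat = a by omega]

lemma norm_zpk_le {z p : ℂ} (k : ℕ) : ‖z * p ^ k‖ ≤ ‖z‖ * ‖p‖ ^ k := by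
  rw [norm_mul, norm_pow]

lemma norm_zpk_le' {z p : ℂ} (hz : ‖z‖ < 1) (hp : ‖p‖ < 1) (k : ℕ) : ‖z * p ^ k‖ ≤ ‖z‖ := by
  calc ‖z * p ^ k‖ ≤ ‖z‖ * ‖p‖ ^ k := norm_zpk_le k
  _ ≤ ‖z‖ * 1 := mul_le_mul_of_nonneg_left (pow_le_one₀ (norm_nonneg p) hp.le) (norm_nonneg z)
  _ = ‖z‖ := mul_one _

lemma factor_ne_zero {z p : ℂ} (hz : ‖z‖ < 1) (hp : ‖p‖ < 1) (k : ℕ) : 1 - z * p ^ k ≠ 0 := by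
  intro h
  have h1 : z * p ^ k = 1 := by linear_combination -h
  have h2 : ‖z * p ^ k‖ < 1 := lt_of_le_of_lt (norm_zpk_le' hz hp k) hz
  rw [h1] at h2
  simp at h2

lemma summable_log_factor {z p : ℂ} (hz : ‖z‖ < 1) (hp : ‖p‖ < 1) :
    Summable fun k : ℕ => Complex.log (1 - z * p ^ k) := by
  set K : ℝ := 1 / (2 * (1 - ‖z‖)) + 1 with hK
  have hz1 : 0 < 1 - ‖z‖ := by linarith
  have hKpos : 0 < K := by positivity
  apply Summable.of_norm_bounded (g := fun k => K * (‖z‖ * ‖p‖ ^ k))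
  · exact ((summable_geometric_of_lt_one (norm_nonneg p) hp).mul_left ‖z‖).mul_left K
  · intro k
    set w := ‖z * p ^ k‖ with hwdef
    have hw0 : 0 ≤ w := norm_nonneg _
    have hwz : w ≤ ‖z‖ := norm_zpk_le' hz hp k
    have hw1 : w < 1 := lt_of_le_of_lt hwz hz
    have hnn : ‖-(z * p ^ k)‖ = w := norm_neg _
    have h1 : (1 : ℂ) - z * p ^ k = 1 + -(z * p ^ k) := by ring
    rw [h1]
    calc ‖Complex.log (1 + -(z * p ^ k))‖
        ≤ ‖-(z * p ^ k)‖ ^ 2 * (1 - ‖-(z * p ^ k)‖)⁻¹ / 2 + ‖-(z * p ^ k)‖ := by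
          apply Complex.norm_log_one_add_le
          rw [hnn]; exact hw1
      _ = w ^ 2 / (2 * (1 - w)) + w := by
          rw [hnn]
          have hne : (1:ℝ) - w ≠ 0 := by linarith
          field_simp
      _ ≤ w / (2 * (1 - ‖z‖)) + w := by
          have : w ^ 2 / (2 * (1 - w)) ≤ w / (2 * (1 - ‖z‖)) := by
            rw [div_le_div_iff₀ (by linarith) (by linarith)]
            nlinarith [sq_nonneg (1 - ‖z‖), mul_le_mul_of_nonneg_left hwz hw0]
          linarith
      _ = K * w := by rw [hK]; field_simp
      _ ≤ K * (‖z‖ * ‖p‖ ^ k) := mul_le_mul_of_nonneg_left (norm_zpk_le k) hKpos.le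

lemma hasProd_qPochInf {z p : ℂ} (hz : ‖z‖ < 1) (hp : ‖p‖ < 1) :
    HasProd (fun k : ℕ => 1 - z * p ^ k) (qPochInf z p) := by
  have := (Complex.hasProd_of_hasSum_log (fun k => factor_ne_zero hz hp k)
    (summable_log_factor hz hp).hasSum).multipliable.hasProd
  exact this

lemma tendsto_prod_qPochInf {z p : ℂ} (hz : ‖z‖ < 1) (hp : ‖p‖ < 1) :
    Tendsto (fun N : ℕ => ∏ k ∈ Finset.range N, (1 - z * p ^ k)) atTop (𝓝 (qPochInf z p)) :=
  (hasProd_qPochInf hz hp).tendsto_prod_nat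

-- Real side
lemma summable_log_real {Q : ℝ} (hQ0 : 0 < Q) (hQ1 : Q < 1) :
    Summable fun k : ℕ => Real.log (1 - Q ^ (k + 1)) := by
  apply Summable.of_norm_bounded (g := fun k => (1 / (1 - Q)) * Q ^ (k + 1))
  · apply Summable.mul_left
    exact ((summable_geometric_of_lt_one hQ0.le hQ1).mul_left Q).congr
      (fun k => by rw [pow_succ]; ring)
  · intro k
    have hqk : Q ^ (k + 1) < 1 := pow_lt_one₀ hQ0.le hQ1 (Nat.succ_ne_zero k)
    have hqk0 : 0 < Q ^ (k + 1) := pow_pos hQ0 _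
    have hpos : 0 < 1 - Q ^ (k + 1) := by linarith
    have hlog : Real.log (1 - Q ^ (k + 1)) ≤ 0 := Real.log_nonpos (by linarith) (by linarith)
    rw [Real.norm_eq_abs, abs_of_nonpos hlog]
    have : Real.log (1 - Q ^ (k + 1))⁻¹ ≤ (1 - Q ^ (k + 1))⁻¹ - 1 :=
      Real.log_le_sub_one_of_pos (by positivity)
    rw [Real.log_inv] at this
    have h2 : (1 - Q ^ (k + 1))⁻¹ - 1 = Q ^ (k + 1) / (1 - Q ^ (k + 1)) := by
      field_simp
      ring
    have h3 : Q ^ (k + 1) / (1 - Q ^ (k + 1)) ≤ Q ^ (k + 1) / (1 - Q) := by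
      apply div_le_div_of_nonneg_left hqk0.le (by linarith)
      have : Q ^ (k + 1) ≤ Q := by
        calc Q ^ (k + 1) ≤ Q ^ 1 := pow_le_pow_of_le_one hQ0.le hQ1.le (by omega)
        _ = Q := pow_one Q
      linarith
    calc -Real.log (1 - Q ^ (k + 1)) ≤ (1 - Q ^ (k + 1))⁻¹ - 1 := by linarith
    _ = Q ^ (k + 1) / (1 - Q ^ (k + 1)) := h2
    _ ≤ Q ^ (k + 1) / (1 - Q) := h3
    _ = 1 / (1 - Q) * Q ^ (k + 1) := by ring


lemma hasProd_qfacLim {Q : ℝ} (hQ0 : 0 < Q) (hQ1 : Q < 1) :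
    HasProd (fun k : ℕ => 1 - Q ^ (k + 1)) (qfacLim Q) := by
  have hpos : ∀ k : ℕ, (0:ℝ) < 1 - Q ^ (k + 1) := fun k => by
    have : Q ^ (k + 1) < 1 := pow_lt_one₀ hQ0.le hQ1 (Nat.succ_ne_zero k)
    linarith
  exact (Real.hasProd_of_hasSum_log (f := fun k : ℕ => 1 - Q ^ (k + 1))
    (fun k => hpos k) (summable_log_real hQ0 hQ1).hasSum).multipliable.hasProd

lemma qfacLim_pos {Q : ℝ} (hQ0 : 0 < Q) (hQ1 : Q < 1) : 0 < qfacLim Q := by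
  have hpos : ∀ k : ℕ, (0:ℝ) < 1 - Q ^ (k + 1) := fun k => by
    have : Q ^ (k + 1) < 1 := pow_lt_one₀ hQ0.le hQ1 (Nat.succ_ne_zero k)
    linarith
  have := Real.rexp_tsum_eq_tprod (f := fun k : ℕ => 1 - Q ^ (k + 1))
    (fun k => hpos k) (summable_log_real hQ0 hQ1)
  have h2 := this
  rw [qfacLim, ← h2]
  exact Real.exp_pos _

lemma tendsto_qfac {Q : ℝ} (hQ0 : 0 < Q) (hQ1 : Q < 1) :
    Tendsto (fun n : ℕ => qfac Q n) atTop (𝓝 (qfacLim Q)) :=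
  (hasProd_qfacLim hQ0 hQ1).tendsto_prod_nat

lemma qfac_anti {Q : ℝ} (hQ0 : 0 < Q) (hQ1 : Q < 1) {n m : ℕ} (h : n ≤ m) :
    qfac Q m ≤ qfac Q n := by
  obtain ⟨k, rfl⟩ := Nat.exists_eq_add_of_le h
  rw [qfac, Finset.prod_range_add]
  have h1 : ∏ i ∈ Finset.range k, (1 - Q ^ (n + i + 1)) ≤ 1 := by
    apply Finset.prod_le_one
    · intro i _
      have : Q ^ (n + i + 1) < 1 := pow_lt_one₀ hQ0.le hQ1 (by omega)
      linarith
    · intro i _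
      have : 0 < Q ^ (n + i + 1) := pow_pos hQ0 _
      linarith
  have h2 : 0 ≤ ∏ i ∈ Finset.range k, (1 - Q ^ (n + i + 1)) := by
    apply Finset.prod_nonneg
    intro i _
    have : Q ^ (n + i + 1) < 1 := pow_lt_one₀ hQ0.le hQ1 (by omega)
    linarith
  calc (∏ x ∈ Finset.range n, (1 - Q ^ (x + 1))) * ∏ x ∈ Finset.range k, (1 - Q ^ (n + x + 1))
      ≤ (∏ x ∈ Finset.range n, (1 - Q ^ (x + 1))) * 1 := by
        exact mul_le_mul_of_nonneg_left h1 (qfac_pos hQ0 hQ1 n).le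
    _ = qfac Q n := mul_one _

lemma qfacLim_le_qfac {Q : ℝ} (hQ0 : 0 < Q) (hQ1 : Q < 1) (n : ℕ) : qfacLim Q ≤ qfac Q n := by
  apply le_of_tendsto (tendsto_qfac hQ0 hQ1)
  filter_upwards [eventually_ge_atTop n] with m hm
  exact qfac_anti hQ0 hQ1 hm

lemma qbinom_le {Q : ℝ} (hQ0 : 0 < Q) (hQ1 : Q < 1) (n j : ℕ) :
    qbinom Q n j ≤ 1 / (qfacLim Q * qfacLim Q) := by
  have hC := qfacLim_pos hQ0 hQ1
  rw [qbinom]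
  split
  · apply div_le_div₀ (by norm_num) (qfac_le_one hQ0 hQ1 n) (by positivity)
    exact mul_le_mul (qfacLim_le_qfac hQ0 hQ1 _) (qfacLim_le_qfac hQ0 hQ1 _) hC.le
      (qfac_pos hQ0 hQ1 _).le
  · positivity

lemma tendsto_qbinom_shift {Q : ℝ} (hQ0 : 0 < Q) (hQ1 : Q < 1) (m : ℤ) :
    Tendsto (fun N : ℕ => qbinom Q (2 * N) (m + N).toNat) atTop (𝓝 (1 / qfacLim Q)) := by
  have hC := qfacLim_pos hQ0 hQ1
  have h2N : Tendsto (fun N : ℕ => qfac Q (2 * N)) atTop (𝓝 (qfacLim Q)) :=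
    (tendsto_qfac hQ0 hQ1).comp
      (tendsto_atTop.2 fun b => eventually_atTop.2 ⟨b, fun N hN => by omega⟩)
  have hup : Tendsto (fun N : ℕ => qfac Q ((m + N).toNat)) atTop (𝓝 (qfacLim Q)) :=
    (tendsto_qfac hQ0 hQ1).comp
      (tendsto_atTop.2 fun b => eventually_atTop.2 ⟨b + m.natAbs, fun N hN => by omega⟩)
  have hdn : Tendsto (fun N : ℕ => qfac Q (2 * N - (m + N).toNat)) atTop (𝓝 (qfacLim Q)) :=
    (tendsto_qfac hQ0 hQ1).comp
      (tendsto_atTop.2 fun b => eventually_atTop.2 ⟨b + m.natAbs, fun N hN => by omega⟩)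
  have hmain : Tendsto
      (fun N : ℕ => qfac Q (2 * N) / (qfac Q ((m + N).toNat) * qfac Q (2 * N - (m + N).toNat)))
      atTop (𝓝 (qfacLim Q / (qfacLim Q * qfacLim Q))) :=
    h2N.div (hup.mul hdn) (by positivity)
  have heq : qfacLim Q / (qfacLim Q * qfacLim Q) = 1 / qfacLim Q := by
    field_simp
  rw [heq] at hmain
  apply hmain.congr'
  filter_upwards [eventually_ge_atTop m.natAbs] with N hN
  rw [qbinom, if_pos (by omega)]

theorem theta3_triple_product (t : ℝ) (ht : 0 < t) (v : ℝ) (q : ℝ)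
    (hq : q = Real.exp (-π * t)) :
    (∑' k : ℤ, (q : ℂ) ^ (k ^ 2) * Complex.exp (2 * k * π * Complex.I * v)) =
      qPochInf ((q : ℂ) ^ 2) ((q : ℂ) ^ 2) *
        qPochInf (-(q : ℂ) * Complex.exp (2 * π * Complex.I * v)) ((q : ℂ) ^ 2) *
        qPochInf (-(q : ℂ) * Complex.exp (-(2 * π * Complex.I * v))) ((q : ℂ) ^ 2) := by
  have hq0 : 0 < q := hq ▸ Real.exp_pos _
  have hq1 : q < 1 := by
    rw [hq]
    apply Real.exp_lt_one_iff.mpr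
    have := Real.pi_pos
    nlinarith
  have hqc : (q:ℂ) ≠ 0 := by exact_mod_cast hq0.ne'
  have hQ0 : 0 < q ^ 2 := by positivity
  have hQ1 : q ^ 2 < 1 := by nlinarith
  set x : ℂ := Complex.exp (2 * π * Complex.I * v) with hxdef
  have hxre : (2 * (π:ℂ) * Complex.I * v) = ((2 * π * v : ℝ) : ℂ) * Complex.I := by
    push_cast; ring
  have hxnorm : ‖x‖ = 1 := by
    rw [hxdef, hxre, Complex.norm_exp_ofReal_mul_I]
  have hx : x ≠ 0 := Complex.exp_ne_zero _
  have hxinv : Complex.exp (-(2 * π * Complex.I * v)) = x⁻¹ := by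
    rw [hxdef, ← Complex.exp_neg]
  have hxinvnorm : ‖x⁻¹‖ = 1 := by rw [norm_inv, hxnorm]; norm_num
  have hnormq : ‖(q:ℂ)‖ = q := by
    rw [Complex.norm_real, Real.norm_eq_abs, abs_of_pos hq0]
  have hnormq2 : ‖(q:ℂ) ^ 2‖ < 1 := by
    rw [norm_pow, hnormq]
    nlinarith
  set C : ℝ := qfacLim (q ^ 2) with hCdef
  have hC : 0 < C := qfacLim_pos hQ0 hQ1
  have hCc : (C:ℂ) ≠ 0 := by exact_mod_cast hC.ne'
  -- the three infinite products
  have hP1 : qPochInf ((q:ℂ) ^ 2) ((q:ℂ) ^ 2) = (C:ℂ) := by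
    have hmap : HasProd (fun k : ℕ => ((1 - (q ^ 2) ^ (k + 1) : ℝ) : ℂ)) ((C:ℂ)) :=
      (hasProd_qfacLim hQ0 hQ1).map Complex.ofRealHom Complex.continuous_ofReal
    have hcongr : (fun k : ℕ => ((1 - (q ^ 2) ^ (k + 1) : ℝ) : ℂ))
        = fun k : ℕ => 1 - (q:ℂ) ^ 2 * ((q:ℂ) ^ 2) ^ k := by
      funext k
      push_cast
      rw [pow_succ]
      ring
    rw [hcongr] at hmap
    exact hmap.tprod_eq
  have hz2 : ‖-(q:ℂ) * x‖ < 1 := by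
    rw [norm_mul, norm_neg, hnormq, hxnorm]
    nlinarith
  have hz3 : ‖-(q:ℂ) * x⁻¹‖ < 1 := by
    rw [norm_mul, norm_neg, hnormq, hxinvnorm]
    nlinarith
  have hprod2 : Tendsto (fun N : ℕ => ∏ j ∈ Finset.range N, (1 + x * (q:ℂ) ^ (2 * j + 1)))
      atTop (𝓝 (qPochInf (-(q:ℂ) * x) ((q:ℂ) ^ 2))) := by
    apply (tendsto_prod_qPochInf hz2 hnormq2).congr
    intro N
    apply Finset.prod_congr rfl
    intro j _
    rw [← pow_mul, pow_succ']
    ring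
  have hprod3 : Tendsto (fun N : ℕ => ∏ j ∈ Finset.range N, (1 + x⁻¹ * (q:ℂ) ^ (2 * j + 1)))
      atTop (𝓝 (qPochInf (-(q:ℂ) * x⁻¹) ((q:ℂ) ^ 2))) := by
    apply (tendsto_prod_qPochInf hz3 hnormq2).congr
    intro N
    apply Finset.prod_congr rfl
    intro j _
    rw [← pow_mul, pow_succ']
    ring
  have hprod : Tendsto (fun N : ℕ => ∏ j ∈ Finset.range N,
      ((1 + x * (q:ℂ) ^ (2 * j + 1)) * (1 + x⁻¹ * (q:ℂ) ^ (2 * j + 1))))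
      atTop (𝓝 (qPochInf (-(q:ℂ) * x) ((q:ℂ) ^ 2) * qPochInf (-(q:ℂ) * x⁻¹) ((q:ℂ) ^ 2))) := by
    apply (hprod2.mul hprod3).congr
    intro N
    rw [← Finset.prod_mul_distrib]
  -- dominated convergence for the sum side
  set F : ℕ → ℤ → ℂ := fun N m =>
    if m ∈ Finset.Icc (-(N:ℤ)) (N:ℤ) then
      (qbinom (q ^ 2) (2 * N) (m + N).toNat : ℂ) * (q:ℂ) ^ (m ^ 2) * x ^ m
    else 0 with hFdef
  have hnorm_qm : ∀ m : ℤ, ‖(q:ℂ) ^ (m ^ 2)‖ = q ^ (m.natAbs ^ 2) := by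
    intro m
    have hcast : (m ^ 2 : ℤ) = ((m.natAbs ^ 2 : ℕ) : ℤ) := by
      push_cast [Int.natAbs_sq]
      exact (_root_.sq_abs m).symm
    rw [hcast, zpow_natCast, norm_pow, hnormq]
  have hnormx : ∀ m : ℤ, ‖x ^ m‖ = 1 := by
    intro m
    rw [norm_zpow, hxnorm, one_zpow]
  have hbound : ∀ N : ℕ, ∀ m : ℤ, ‖F N m‖ ≤ (1 / (C * C)) * q ^ m.natAbs := by
    intro N m
    have hb1 : (0:ℝ) ≤ 1 / (C * C) * q ^ m.natAbs := by positivity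
    rw [hFdef]
    simp only
    split
    · rw [norm_mul, norm_mul, hnorm_qm, hnormx, mul_one, Complex.norm_real, Real.norm_eq_abs,
        _root_.abs_of_nonneg (qbinom_nonneg hQ0 hQ1 _ _)]
      apply mul_le_mul (qbinom_le hQ0 hQ1 _ _)
      · apply pow_le_pow_of_le_one hq0.le hq1.le
        exact Nat.le_self_pow two_ne_zero _
      · positivity
      · positivity
    · simpa using hb1
  have hsummable : Summable (fun m : ℤ => (1 / (C * C)) * q ^ m.natAbs) := by
    apply Summable.mul_left
    apply Summable.of_nat_of_neg <;>
      simpa using summable_geometric_of_lt_one hq0.le hq1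
  have htends : ∀ m : ℤ, Tendsto (fun N => F N m) atTop
      (𝓝 (((1 / C : ℝ) : ℂ) * ((q:ℂ) ^ (m ^ 2) * x ^ m))) := by
    intro m
    have h1 : Tendsto (fun N : ℕ => ((qbinom (q ^ 2) (2 * N) (m + N).toNat : ℝ) : ℂ))
        atTop (𝓝 ((1 / C : ℝ) : ℂ)) :=
      (Complex.continuous_ofReal.tendsto _).comp (tendsto_qbinom_shift hQ0 hQ1 m)
    have h2 := h1.mul_const ((q:ℂ) ^ (m ^ 2) * x ^ m)
    apply h2.congr'
    filter_upwards [eventually_ge_atTop m.natAbs] with N hN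
    rw [hFdef]
    simp only
    rw [if_pos]
    · ring
    · simp only [Finset.mem_Icc]
      omega
  have hDCT := tendsto_tsum_of_dominated_convergence hsummable htends
    (Eventually.of_forall hbound)
  -- tsum of F N is the finite sum
  have hFsum : ∀ N : ℕ, (∑' m : ℤ, F N m)
      = ∑ m ∈ Finset.Icc (-(N:ℤ)) (N:ℤ),
          (qbinom (q ^ 2) (2 * N) (m + N).toNat : ℂ) * (q:ℂ) ^ (m ^ 2) * x ^ m := by
    intro N
    rw [tsum_eq_sum (s := Finset.Icc (-(N:ℤ)) (N:ℤ))]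
    · apply Finset.sum_congr rfl
      intro m hm
      rw [hFdef]
      simp only
      rw [if_pos hm]
    · intro m hm
      rw [hFdef]
      simp only
      rw [if_neg hm]
  have hseq : ∀ N : ℕ, (∑' m : ℤ, F N m) = ∏ j ∈ Finset.range N,
      ((1 + x * (q:ℂ) ^ (2 * j + 1)) * (1 + x⁻¹ * (q:ℂ) ^ (2 * j + 1))) := by
    intro N
    rw [hFsum N, key_identity hq0 hq1 x hx N]
  have hprod' : Tendsto (fun N : ℕ => ∑' m : ℤ, F N m) atTop
      (𝓝 (qPochInf (-(q:ℂ) * x) ((q:ℂ) ^ 2) * qPochInf (-(q:ℂ) * x⁻¹) ((q:ℂ) ^ 2))) := by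
    apply hprod.congr
    intro N
    rw [hseq N]
  have hEQ : (∑' m : ℤ, ((1 / C : ℝ) : ℂ) * ((q:ℂ) ^ (m ^ 2) * x ^ m))
      = qPochInf (-(q:ℂ) * x) ((q:ℂ) ^ 2) * qPochInf (-(q:ℂ) * x⁻¹) ((q:ℂ) ^ 2) :=
    tendsto_nhds_unique hDCT hprod'
  rw [tsum_mul_left] at hEQ
  have htheta : (∑' k : ℤ, (q : ℂ) ^ (k ^ 2) * Complex.exp (2 * k * π * Complex.I * v))
      = ∑' m : ℤ, (q:ℂ) ^ (m ^ 2) * x ^ m := by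
    apply tsum_congr
    intro k
    congr 1
    rw [hxdef, ← Complex.exp_int_mul]
    congr 1
    push_cast
    ring
  rw [htheta, hP1, hxinv]
  have hfrac : ((1 / C : ℝ) : ℂ) = (C:ℂ)⁻¹ := by
    push_cast
    ring
  rw [hfrac] at hEQ
  have := congrArg (fun w => (C:ℂ) * w) hEQ
  rw [← mul_assoc, mul_inv_cancel₀ hCc, one_mul] at this
  rw [this]
  ring
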